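/- For all indices i, k, l, j with 0 ≤ i ≤ k < l ≤ j ≤ n−1, the orthogonal distance from the shorter segment to the cloud satisfies D(k,l) ≤ 2·D(i,j). (Lemma 5, 'segment_error': any sub-segment of a segment that ε-approximates a monotone cloud 2ε-approximates the corresponding subcloud.) -/

import Mathlib

/-- The projection value `t s = ⟪p s, u⟫` of the cloud point `p s` onto the direction `u`. -/
noncomputable def projVal {d n : ℕ} (p : Fin n → EuclideanSpace ℝ (Fin d))
    (u : EuclideanSpace ℝ (Fin d)) (s : Fin n) : ℝ :=
  inner ℝ (p s) u

/-- The point `q(s,i,j)` of the straight segment `[p i, p j]` whose projection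
onto `u` equals `t s`. -/
noncomputable def segPoint {d n : ℕ} (p : Fin n → EuclideanSpace ℝ (Fin d))
    (u : EuclideanSpace ℝ (Fin d)) (s i j : Fin n) : EuclideanSpace ℝ (Fin d) :=
  p i + ((projVal p u s - projVal p u i) / (projVal p u j - projVal p u i)) • (p j - p i)

/-- The orthogonal distance `dOrth(s,i,j)` from `p s` to the segment `[p i, p j]`,
measured orthogonally to `u`. -/
noncomputable def dOrth {d n : ℕ} (p : Fin n → EuclideanSpace ℝ (Fin d))
    (u : EuclideanSpace ℝ (Fin d)) (s i j : Fin n) : ℝ :=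
  dist (p s) (segPoint p u s i j)

/-- The orthogonal distance `D(i,j)` from the segment `[p i, p j]` to the cloud:
the maximum of `dOrth(s,i,j)` over `i ≤ s ≤ j` (endpoints contribute `0`). -/
noncomputable def segCloudDist {d n : ℕ} (p : Fin n → EuclideanSpace ℝ (Fin d))
    (u : EuclideanSpace ℝ (Fin d)) (i j : Fin n) : ℝ :=
  (insert (0 : ℝ) ((Finset.Icc i j).image fun s => dOrth p u s i j)).max'
    (Finset.insert_nonempty _ _)

/-- Lemma 5 (`segment_error`): any sub-segment of a segment that `ε`-approximates a
monotone cloud `2ε`-approximates the corresponding subcloud. -/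
theorem segment_error {d n : ℕ} (hd : 1 ≤ d) (hn : 2 ≤ n)
    (p : Fin n → EuclideanSpace ℝ (Fin d)) (u : EuclideanSpace ℝ (Fin d))
    (hu : ‖u‖ = 1) (hmono : StrictMono (projVal p u))
    (i k l j : Fin n) (hik : i ≤ k) (hkl : k < l) (hlj : l ≤ j) :
    segCloudDist p u k l ≤ 2 * segCloudDist p u i j := by
  set D := segCloudDist p u i j with hD
  have hij : i < j := lt_of_le_of_lt hik (lt_of_lt_of_le hkl hlj)
  have hBij : projVal p u i < projVal p u j := hmono hij
  have hBkl : projVal p u k < projVal p u l := hmono hkl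
  have hD0 : (0:ℝ) ≤ D :=
    Finset.le_max' _ 0 (Finset.mem_insert_self _ _)
  have hmem : ∀ s, i ≤ s → s ≤ j → dOrth p u s i j ≤ D := by
    intro s h1 h2
    rw [hD]
    unfold segCloudDist
    refine Finset.le_max' _ _ ?_
    exact Finset.mem_insert_of_mem
      (Finset.mem_image_of_mem _ (Finset.mem_Icc.mpr ⟨h1, h2⟩))
  unfold segCloudDist
  apply Finset.max'_le
  intro x hx
  rcases Finset.mem_insert.mp hx with rfl | hx
  · linarith
  obtain ⟨s, hs, rfl⟩ := Finset.mem_image.mp hx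
  obtain ⟨hks, hsl⟩ := Finset.mem_Icc.mp hs
  set lam := (projVal p u s - projVal p u k) / (projVal p u l - projVal p u k) with hlam
  have hts1 : projVal p u k ≤ projVal p u s := hmono.monotone hks
  have hts2 : projVal p u s ≤ projVal p u l := hmono.monotone hsl
  have hlam0 : 0 ≤ lam := div_nonneg (by linarith) (by linarith)
  have hlam1 : lam ≤ 1 := by
    rw [hlam, div_le_one (by linarith)]; linarith
  have key : segPoint p u s i j
      = segPoint p u k i j + lam • (segPoint p u l i j - segPoint p u k i j) := by
    simp only [segPoint]
    have hcoef : (projVal p u s - projVal p u i) / (projVal p u j - projVal p u i)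
        = (projVal p u k - projVal p u i) / (projVal p u j - projVal p u i)
          + lam * ((projVal p u l - projVal p u i) / (projVal p u j - projVal p u i)
            - (projVal p u k - projVal p u i) / (projVal p u j - projVal p u i)) := by
      have hne1 : projVal p u j - projVal p u i ≠ 0 := by linarith
      have hne2 : projVal p u l - projVal p u k ≠ 0 := by linarith
      rw [hlam]
      field_simp
      ring
    rw [hcoef]
    module
  have hskl : segPoint p u s k l = p k + lam • (p l - p k) := rfl
  have h1 : dist (p s) (segPoint p u s i j) ≤ D :=
    hmem s (le_trans hik hks) (le_trans hsl hlj)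
  have hk' : dist (p k) (segPoint p u k i j) ≤ D := hmem k hik (le_trans (le_of_lt hkl) hlj)
  have hl' : dist (p l) (segPoint p u l i j) ≤ D := hmem l (le_trans hik (le_of_lt hkl)) hlj
  have h2 : dist (segPoint p u s i j) (segPoint p u s k l) ≤ D := by
    rw [hskl, key, dist_eq_norm]
    have hexp : (segPoint p u k i j + lam • (segPoint p u l i j - segPoint p u k i j))
        - (p k + lam • (p l - p k))
        = (1 - lam) • (segPoint p u k i j - p k) + lam • (segPoint p u l i j - p l) := by
      module
    rw [hexp]
    calc ‖(1 - lam) • (segPoint p u k i j - p k) + lam • (segPoint p u l i j - p l)‖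
        ≤ ‖(1 - lam) • (segPoint p u k i j - p k)‖ + ‖lam • (segPoint p u l i j - p l)‖ :=
          norm_add_le _ _
      _ = (1 - lam) * ‖segPoint p u k i j - p k‖ + lam * ‖segPoint p u l i j - p l‖ := by
          rw [norm_smul, norm_smul, Real.norm_eq_abs, Real.norm_eq_abs,
            abs_of_nonneg (by linarith), abs_of_nonneg hlam0]
      _ ≤ (1 - lam) * D + lam * D := by
          have hk'' : ‖segPoint p u k i j - p k‖ ≤ D := by
            rw [← dist_eq_norm, dist_comm]; exact hk'
          have hl'' : ‖segPoint p u l i j - p l‖ ≤ D := by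
            rw [← dist_eq_norm, dist_comm]; exact hl'
          have := mul_le_mul_of_nonneg_left hk'' (by linarith : (0:ℝ) ≤ 1 - lam)
          have := mul_le_mul_of_nonneg_left hl'' hlam0
          linarith
      _ = D := by ring
  calc dOrth p u s k l = dist (p s) (segPoint p u s k l) := rfl
    _ ≤ dist (p s) (segPoint p u s i j) + dist (segPoint p u s i j) (segPoint p u s k l) :=
        dist_triangle _ _ _
    _ ≤ D + D := add_le_add h1 h2
    _ = 2 * D := by ring
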